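/- Let ζ, θ, u, v : ℝ → ℝ be differentiable with, for all t: sin(ζ t) ≠ 0, sin(θ t) ≠ 0, u′(t) = cos(ζ t)/sin(ζ t), v′(t) = cos(θ t)/(sin(ζ t)·sin(θ t)). Define F : ℝ² → ℝ³ by F(t,s) = (t − s·sin(θ t)·sin(ζ t), u t − s·sin(θ t)·cos(ζ t), v t − s·cos(θ t)). Then at every (t,s), the squared Euclidean norm of the partial derivative in the t-direction satisfies ‖∂F/∂t‖² = 1/(sin(ζ t)²·sin(θ t)²) + s²·(ζ′(t)²·sin(θ t)² + θ′(t)²). -/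

import Mathlib

open Real

/-- Euler's parametrization of a developable (tangent) surface. -/
noncomputable def eulerF (ζ θ u v : ℝ → ℝ) (w : ℝ × ℝ) : EuclideanSpace ℝ (Fin 3) :=
  WithLp.toLp 2 ![w.1 - w.2 * sin (θ w.1) * sin (ζ w.1),
    u w.1 - w.2 * sin (θ w.1) * cos (ζ w.1),
    v w.1 - w.2 * cos (θ w.1)]

theorem euler_squared_norm_of_t_partial
    (ζ θ u v : ℝ → ℝ)
    (hζ : Differentiable ℝ ζ) (hθ : Differentiable ℝ θ)
    (hu : Differentiable ℝ u) (hv : Differentiable ℝ v)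
    (hsinζ : ∀ t, sin (ζ t) ≠ 0) (hsinθ : ∀ t, sin (θ t) ≠ 0)
    (hu' : ∀ t, deriv u t = cos (ζ t) / sin (ζ t))
    (hv' : ∀ t, deriv v t = cos (θ t) / (sin (ζ t) * sin (θ t))) :
    ∀ t s : ℝ,
      ‖deriv (fun t' => eulerF ζ θ u v (t', s)) t‖ ^ 2 =
        1 / ((sin (ζ t)) ^ 2 * (sin (θ t)) ^ 2) +
          s ^ 2 * ((deriv ζ t) ^ 2 * (sin (θ t)) ^ 2 + (deriv θ t) ^ 2) := by
  intro t s
  have ha := hsinζ t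
  have hc := hsinθ t
  have hζ' : HasDerivAt ζ (deriv ζ t) t := (hζ t).hasDerivAt
  have hθ' : HasDerivAt θ (deriv θ t) t := (hθ t).hasDerivAt
  have hsζ : HasDerivAt (fun t' => sin (ζ t')) (cos (ζ t) * deriv ζ t) t := hζ'.sin
  have hcζ : HasDerivAt (fun t' => cos (ζ t')) (-sin (ζ t) * deriv ζ t) t := hζ'.cos
  have hsθ : HasDerivAt (fun t' => sin (θ t')) (cos (θ t) * deriv θ t) t := hθ'.sin
  have hcθ : HasDerivAt (fun t' => cos (θ t')) (-sin (θ t) * deriv θ t) t := hθ'.cos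
  set p := deriv ζ t with hp
  set q := deriv θ t with hq
  set d1 : ℝ := 1 - s * (cos (θ t) * q * sin (ζ t) + sin (θ t) * (cos (ζ t) * p)) with hd1
  set d2 : ℝ := deriv u t - s * (cos (θ t) * q * cos (ζ t) + sin (θ t) * (-sin (ζ t) * p))
    with hd2
  set d3 : ℝ := deriv v t - s * (-sin (θ t) * q) with hd3
  have h1 : HasDerivAt (fun t' => t' - s * sin (θ t') * sin (ζ t')) d1 t := by
    have := (hasDerivAt_id t).sub (((hasDerivAt_const t s).mul hsθ).mul hsζ)
    refine this.congr_deriv ?_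
    rw [hd1]; simp only [Pi.mul_apply]; ring
  have h2 : HasDerivAt (fun t' => u t' - s * sin (θ t') * cos (ζ t')) d2 t := by
    have := (hu t).hasDerivAt.sub (((hasDerivAt_const t s).mul hsθ).mul hcζ)
    refine this.congr_deriv ?_
    rw [hd2]; simp only [Pi.mul_apply]; ring
  have h3 : HasDerivAt (fun t' => v t' - s * cos (θ t')) d3 t := by
    have := (hv t).hasDerivAt.sub ((hasDerivAt_const t s).mul hcθ)
    refine this.congr_deriv ?_
    rw [hd3]; ring
  have hg : HasDerivAt
      (fun t' => (![t' - s * sin (θ t') * sin (ζ t'),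
        u t' - s * sin (θ t') * cos (ζ t'),
        v t' - s * cos (θ t')] : Fin 3 → ℝ)) (![d1, d2, d3] : Fin 3 → ℝ) t := by
    rw [hasDerivAt_pi]
    intro i
    fin_cases i
    · simpa using h1
    · simpa using h2
    · simpa using h3
  have hf : HasDerivAt (fun t' => eulerF ζ θ u v (t', s))
      ((PiLp.continuousLinearEquiv 2 ℝ (fun _ : Fin 3 => ℝ)).symm ![d1, d2, d3]) t :=
    ((PiLp.continuousLinearEquiv 2 ℝ (fun _ : Fin 3 => ℝ)).symm.toContinuousLinearMap.hasFDerivAt).comp_hasDerivAt t hg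
  rw [hf.deriv, EuclideanSpace.norm_eq, Real.sq_sqrt (by positivity), Fin.sum_univ_three]
  simp only [PiLp.continuousLinearEquiv_symm_apply, PiLp.toLp_apply,
    Matrix.cons_val_zero, Matrix.cons_val_one, Matrix.head_cons, Matrix.cons_val_two,
    Matrix.tail_cons, Real.norm_eq_abs, sq_abs]
  rw [hd1, hd2, hd3, hu' t, hv' t]
  have h1 := sin_sq_add_cos_sq (ζ t)
  have h2 := sin_sq_add_cos_sq (θ t)
  field_simp
  linear_combination
    (sin (θ t) ^ 2 - 2 * s * sin (ζ t) * sin (θ t) ^ 2 * cos (θ t) * q +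
      s ^ 2 * q ^ 2 * sin (θ t) ^ 2 * sin (ζ t) ^ 2 * cos (θ t) ^ 2 +
      s ^ 2 * p ^ 2 * sin (θ t) ^ 4 * sin (ζ t) ^ 2) * h1 +
    (1 + s ^ 2 * q ^ 2 * sin (ζ t) ^ 2 * sin (θ t) ^ 2) * h2
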